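/- In the Artin group A(3,3,3) = ⟨s, t, r | sts = tst, trt = rtr, srs = rsr⟩, for every integer k, one has (t^k s t r)(t^{-k} s t r)(s t r s t r)^{-1} = t^k s r^{-k} s^{-1}. -/

import Mathlib

namespace A333

/-- The defining relations of the Artin group
`A(3,3,3) = ⟨s, t, r | sts = tst, trt = rtr, srs = rsr⟩`,
with `0, 1, 2` playing the roles of `s, t, r`. -/
def rels : Set (FreeGroup (Fin 3)) :=
  { FreeGroup.of 0 * FreeGroup.of 1 * FreeGroup.of 0 *
      (FreeGroup.of 1 * FreeGroup.of 0 * FreeGroup.of 1)⁻¹,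
    FreeGroup.of 1 * FreeGroup.of 2 * FreeGroup.of 1 *
      (FreeGroup.of 2 * FreeGroup.of 1 * FreeGroup.of 2)⁻¹,
    FreeGroup.of 0 * FreeGroup.of 2 * FreeGroup.of 0 *
      (FreeGroup.of 2 * FreeGroup.of 0 * FreeGroup.of 2)⁻¹ }

/-- The Artin group `A(3,3,3)`. -/
abbrev Grp := PresentedGroup rels

def s : Grp := PresentedGroup.of 0
def t : Grp := PresentedGroup.of 1
def r : Grp := PresentedGroup.of 2

lemma trt : (t * r * t : Grp) = r * t * r := by
  have h : ((QuotientGroup.mk (FreeGroup.of 1 * FreeGroup.of 2 * FreeGroup.of 1 *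
      (FreeGroup.of 2 * FreeGroup.of 1 * FreeGroup.of 2)⁻¹) : Grp)) = 1 := by
    apply (QuotientGroup.eq_one_iff _).2
    exact Subgroup.subset_normalClosure (by simp [rels])
  have h2 : (t * r * t : Grp) * (r * t * r)⁻¹ = 1 := by
    exact h
  exact mul_inv_eq_one.mp h2

end A333

open A333 in
/-- In `A(3,3,3)`, for every integer `k`,
`(t^k str)(t^{-k} str)(strstr)⁻¹ = t^k s r^{-k} s⁻¹`. -/
theorem A333_klein_identity (k : ℤ) :
    (t ^ k * s * t * r) * (t ^ (-k) * s * t * r) * (s * t * r * s * t * r)⁻¹ =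
      t ^ k * s * r ^ (-k) * s⁻¹ := by
  have hconj : (s * t * r) * t * (s * t * r)⁻¹ = s * r * s⁻¹ := by
    calc (s * t * r) * t * (s * t * r)⁻¹ = s * (t * r * t) * r⁻¹ * t⁻¹ * s⁻¹ := by group
      _ = s * (r * t * r) * r⁻¹ * t⁻¹ * s⁻¹ := by rw [A333.trt]
      _ = s * r * s⁻¹ := by group
  have key : (s * t * r) * t ^ (-k) * (s * t * r)⁻¹ = s * r ^ (-k) * s⁻¹ := by
    have h1 : ((s * t * r) * t * (s * t * r)⁻¹) ^ (-k) = (s * r * s⁻¹) ^ (-k) := by rw [hconj]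
    rwa [conj_zpow, conj_zpow] at h1
  calc (t ^ k * s * t * r) * (t ^ (-k) * s * t * r) * (s * t * r * s * t * r)⁻¹
      = t ^ k * ((s * t * r) * t ^ (-k) * (s * t * r)⁻¹) := by group
    _ = t ^ k * (s * r ^ (-k) * s⁻¹) := by rw [key]
    _ = t ^ k * s * r ^ (-k) * s⁻¹ := by group
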